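/- Let $f : \mathbb{R}^N \to \mathbb{R}$ be twice continuously differentiable and concave such that $d^\top \nabla^2 f(x) d = 0$ for every $x$ and every $d$ with $\sum_i d_i = 0$. Then there exist a function $G : \mathbb{R} \to \mathbb{R}$ and a vector $\beta \in \mathbb{R}^N$ with $\sum_i \beta_i = 0$ such that $f(x) = G(\sum_{i=1}^N x_i) + \beta^\top x$ for all $x$. -/

import Mathlib

open Set

private lemma antitone_hasDerivAt_nonpos {g : ℝ → ℝ} {a x : ℝ}
    (hg : Antitone g) (h : HasDerivAt g a x) : a ≤ 0 := by
  have h1 : Filter.Tendsto (slope g x) (nhdsWithin x (Set.Ioi x)) (nhds a) :=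
    (hasDerivAt_iff_tendsto_slope.1 h).mono_left
      (nhdsWithin_mono x (fun y hy => ne_of_gt hy))
  refine le_of_tendsto h1 ?_
  filter_upwards [self_mem_nhdsWithin] with y hy
  have h2 : g y ≤ g x := hg (le_of_lt hy)
  have hxy : (0:ℝ) < y - x := sub_pos.2 hy
  rw [slope_def_field]
  exact div_nonpos_of_nonpos_of_nonneg (by linarith) (le_of_lt hxy)

/-- A concave `C²` function on `ℝ^N` whose Hessian quadratic form
vanishes on all zero-sum directions has the structural form
`f(x) = G(∑ᵢ xᵢ) + βᵀx` with `∑ᵢ βᵢ = 0`. -/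
theorem structural_form_of_zero_sum_flat
    {N : ℕ} (f : (Fin N → ℝ) → ℝ)
    (hf : ContDiff ℝ 2 f) (hconc : ConcaveOn ℝ Set.univ f)
    (hflat : ∀ (x d : Fin N → ℝ), (∑ i, d i) = 0 →
      fderiv ℝ (fun y => fderiv ℝ f y d) x d = 0) :
    ∃ (G : ℝ → ℝ) (β : Fin N → ℝ), (∑ i, β i) = 0 ∧
      ∀ x : Fin N → ℝ, f x = G (∑ i, x i) + ∑ i, β i * x i := by
  classical
  obtain rfl | hN0 := eq_or_ne N 0
  · exact ⟨fun _ => f 0, 0, by simp, fun x => by simp [Subsingleton.elim x 0]⟩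
  have hNne : (N:ℝ) ≠ 0 := Nat.cast_ne_zero.2 hN0
  have hf1 : ContDiff ℝ 1 f := hf.of_le (by norm_num)
  have hdf : Differentiable ℝ f := hf1.differentiable one_ne_zero
  have hC1 : ContDiff ℝ 1 (fderiv ℝ f) := hf.fderiv_right (m := 1) (by norm_num)
  have hdf2 : Differentiable ℝ (fderiv ℝ f) := hC1.differentiable one_ne_zero
  set B := fun x => fderiv ℝ (fderiv ℝ f) x with hB
  have hBsymm : ∀ x v w, B x v w = B x w v := fun x v w =>
    second_derivative_symmetric (fun y => (hdf y).hasFDerivAt) (hdf2 x).hasFDerivAt v w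
  have hEval : ∀ (p v : Fin N → ℝ), HasFDerivAt (fun y => fderiv ℝ f y v)
      ((ContinuousLinearMap.apply ℝ ℝ v).comp (B p)) p := fun p v =>
    (ContinuousLinearMap.apply ℝ ℝ v).hasFDerivAt.comp p (hdf2 p).hasFDerivAt
  have hline : ∀ (x d : Fin N → ℝ) (t : ℝ), HasDerivAt (fun t : ℝ => x + t • d) d t := by
    intro x d t
    simpa using ((hasDerivAt_id t).smul_const d).const_add x
  -- nonpositivity of the quadratic form
  have hquad : ∀ x v, B x v v ≤ 0 := by
    intro x v
    have hg' : ∀ t : ℝ, HasDerivAt (fun t : ℝ => f (x + t • v)) (fderiv ℝ f (x + t • v) v) t :=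
      fun t => (hdf _).hasFDerivAt.comp_hasDerivAt t (hline x v t)
    have hgconc : ConcaveOn ℝ Set.univ (fun t : ℝ => f (x + t • v)) := by
      have h2 : (fun t : ℝ => f (x + t • v)) = f ∘ (AffineMap.lineMap x (x + v)) := by
        funext t
        simp [AffineMap.lineMap_apply, add_comm]
      have h3 := hconc.comp_affineMap (AffineMap.lineMap x (x + v) : ℝ →ᵃ[ℝ] (Fin N → ℝ))
      rw [Set.preimage_univ] at h3
      rw [h2]; exact h3
    have hanti : AntitoneOn (deriv fun t : ℝ => f (x + t • v)) Set.univ :=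
      hgconc.antitoneOn_deriv (fun t _ => (hg' t).differentiableAt)
    have hanti' : Antitone (fun t : ℝ => fderiv ℝ f (x + t • v) v) := by
      intro s t hst
      have h4 := hanti (Set.mem_univ s) (Set.mem_univ t) hst
      rwa [(hg' s).deriv, (hg' t).deriv] at h4
    have h5 : HasDerivAt (fun t : ℝ => fderiv ℝ f (x + t • v) v) (B x v v) 0 := by
      have h6 := (hEval (x + (0:ℝ) • v) v).comp_hasDerivAt 0 (hline x v 0)
      simpa [Function.comp_def] using h6
    exact antitone_hasDerivAt_nonpos hanti' h5
  -- the quadratic form vanishes on zero-sum directions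
  have hdd : ∀ (x d : Fin N → ℝ), (∑ i, d i) = 0 → B x d d = 0 := by
    intro x d hd
    have h0 := hflat x d hd
    rw [(hEval x d).fderiv] at h0
    simpa using h0
  -- the bilinear form vanishes whenever the second argument is zero-sum
  have hzero : ∀ (x d : Fin N → ℝ), (∑ i, d i) = 0 → ∀ v, B x v d = 0 := by
    intro x d hd v
    by_contra hb
    have key : ∀ t : ℝ, B x v v + 2 * t * B x v d ≤ 0 := by
      intro t
      have h6 := hquad x (v + t • d)
      have e1 : B x (v + t • d) (v + t • d)
          = B x v v + t * B x v d + (t * B x d v + t * t * B x d d) := by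
        simp only [map_add, map_smul, ContinuousLinearMap.add_apply,
          ContinuousLinearMap.smul_apply, smul_eq_mul]
        ring
      rw [e1, hdd x d hd, hBsymm x d v] at h6
      linarith
    have h8 : 2 * ((1 - B x v v) / (2 * B x v d)) * B x v d = 1 - B x v v := by
      field_simp
    have h7 := key ((1 - B x v v) / (2 * B x v d))
    rw [h8] at h7
    linarith
  -- the directional derivative along a zero-sum direction is constant
  have hgradconst : ∀ d : Fin N → ℝ, (∑ i, d i) = 0 →
      ∀ x, fderiv ℝ f x d = fderiv ℝ f 0 d := by
    intro d hd x
    apply is_const_of_fderiv_eq_zero (𝕜 := ℝ) (f := fun y => fderiv ℝ f y d)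
    · exact fun y => (hEval y d).differentiableAt
    · intro y
      rw [(hEval y d).fderiv]
      ext v
      simp [hzero y d hd v]
  set A := fderiv ℝ f 0 with hA
  set a : Fin N → ℝ := fun i => A (fun j => if i = j then 1 else 0) with ha
  set m : ℝ := (∑ i, a i) / N with hm
  have hAx : ∀ x : Fin N → ℝ, A x = ∑ i, x i * a i := by
    intro x
    conv_lhs => rw [pi_eq_sum_univ x]
    rw [map_sum]
    simp [smul_eq_mul, ha]
  refine ⟨fun s => f (fun _ => s / N) - A (fun _ => s / N) + m * s, fun i => a i - m, ?_, ?_⟩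
  · rw [Finset.sum_sub_distrib, Finset.sum_const, Finset.card_univ, Fintype.card_fin,
      nsmul_eq_mul, hm]
    field_simp
    simp
  · intro x
    set s : ℝ := ∑ i, x i with hs
    set c : ℝ := s / N with hc
    set d : Fin N → ℝ := fun i => c - x i with hdd'
    have hd : (∑ i, d i) = 0 := by
      rw [hdd']
      rw [Finset.sum_sub_distrib, Finset.sum_const, Finset.card_univ, Fintype.card_fin,
        nsmul_eq_mul, hc, ← hs]
      field_simp
      simp
    have hxd : x + d = fun _ => c := by
      funext i
      simp [hdd']
    have hφ : ∀ t : ℝ, HasDerivAt (fun t : ℝ => f (x + t • d) - t * A d)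
        (fderiv ℝ f (x + t • d) d - A d) t := by
      intro t
      have h10 := ((hdf _).hasFDerivAt.comp_hasDerivAt t (hline x d t)).sub
        ((hasDerivAt_id t).mul_const (A d))
      simpa [Function.comp_def, Pi.sub_def] using h10
    have h9 := is_const_of_deriv_eq_zero (𝕜 := ℝ)
      (f := fun t : ℝ => f (x + t • d) - t * A d)
      (fun t => (hφ t).differentiableAt)
      (fun t => by rw [(hφ t).deriv, hgradconst d hd (x + t • d), hA]; ring) 1 0
    simp only [one_smul, zero_smul, add_zero, one_mul, zero_mul, sub_zero] at h9
    rw [hxd] at h9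
    -- h9 : f (fun _ => c) - A d = f x
    have hAd : A d = A (fun _ => c) - A x := by
      have hde : d = (fun _ => c) - x := by funext i; simp [hdd']
      rw [hde, map_sub]
    have hsum : ∑ i, (a i - m) * x i = ∑ i, x i * a i - m * s := by
      rw [hs, Finset.mul_sum, ← Finset.sum_sub_distrib]
      exact Finset.sum_congr rfl (fun i _ => by ring)
    have hAx' := hAx x
    rw [hAd] at h9
    have hfx : f x = f (fun _ => c) - A (fun _ => c) + A x := by linarith
    rw [hfx, hsum, hc]
    rw [hAx']
    ring
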